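/- Let E be a nonzero real Banach space and A ⊆ E × E* a closed, monotone, and quasidense subset. Then A is maximally monotone: if c ∈ E × E* and q_L(a − c) ≥ 0 for all a ∈ A, then c ∈ A. -/

import Mathlib

theorem stmt13 {E : Type*} [NormedAddCommGroup E] [NormedSpace ℝ E] [CompleteSpace E]
    [Nontrivial E]
    (A : Set (E × StrongDual ℝ E))
    (hclosed : IsClosed A)
    (hmono : ∀ a ∈ A, ∀ b ∈ A, 0 ≤ (a.2 - b.2) (a.1 - b.1))
    (hqd : ∀ c : E × StrongDual ℝ E,
      (⨅ a ∈ A, ((‖a.1 - c.1‖ ^ 2 / 2 + ‖a.2 - c.2‖ ^ 2 / 2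
        + (a.2 - c.2) (a.1 - c.1) : ℝ) : EReal)) ≤ 0)
    (c : E × StrongDual ℝ E)
    (hc : ∀ a ∈ A, 0 ≤ (a.2 - c.2) (a.1 - c.1)) :
    c ∈ A := by
  rw [← hclosed.closure_eq]
  rw [Metric.mem_closure_iff]
  intro ε hε
  have hqd' := hqd c
  have hlt : (⨅ a ∈ A, ((‖a.1 - c.1‖ ^ 2 / 2 + ‖a.2 - c.2‖ ^ 2 / 2
      + (a.2 - c.2) (a.1 - c.1) : ℝ) : EReal)) < ((ε ^ 2 / 8 : ℝ) : EReal) := by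
    refine lt_of_le_of_lt hqd' ?_
    exact_mod_cast (by positivity : (0:ℝ) < ε ^ 2 / 8)
  rw [iInf_lt_iff] at hlt
  obtain ⟨a, ha⟩ := hlt
  rw [iInf_lt_iff] at ha
  obtain ⟨haA, ha⟩ := ha
  rw [EReal.coe_lt_coe_iff] at ha
  have hq : 0 ≤ (a.2 - c.2) (a.1 - c.1) := hc a haA
  refine ⟨a, haA, ?_⟩
  have h1 : ‖a.1 - c.1‖ ^ 2 < ε ^ 2 / 4 := by nlinarith [sq_nonneg ‖a.2 - c.2‖]
  have h2 : ‖a.2 - c.2‖ ^ 2 < ε ^ 2 / 4 := by nlinarith [sq_nonneg ‖a.1 - c.1‖]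
  have h1' : ‖a.1 - c.1‖ < ε / 2 := by nlinarith [norm_nonneg (a.1 - c.1)]
  have h2' : ‖a.2 - c.2‖ < ε / 2 := by nlinarith [norm_nonneg (a.2 - c.2)]
  rw [Prod.dist_eq]
  have d1 : dist c.1 a.1 < ε := by rw [dist_eq_norm, ← norm_neg]; simpa using h1'.trans (by linarith)
  have d2 : dist c.2 a.2 < ε := by rw [dist_eq_norm, ← norm_neg]; simpa using h2'.trans (by linarith)
  exact max_lt d1 d2
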